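/- Let G be a connected finite simple graph of order n ≥ 2 and let uv be an edge of G. Then b_dR(G) ≤ deg(u) + deg(v) − 1 − |N(u) ∩ N(v)|. -/
import Mathlib


/-- A double Roman dominating function (DRDF) on a graph `G`: a function
`f : V → ℕ` taking values in `{0,1,2,3}` such that every vertex assigned `0`
has a neighbor assigned `3` or two distinct neighbors assigned `2`, and every
vertex assigned `1` has a neighbor assigned at least `2`. -/
def IsDRDF {V : Type*} (G : SimpleGraph V) (f : V → ℕ) : Prop :=
  (∀ v, f v ≤ 3) ∧
  (∀ v, f v = 0 →
    (∃ w, G.Adj v w ∧ f w = 3) ∨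
    (∃ w₁ w₂, G.Adj v w₁ ∧ G.Adj v w₂ ∧ w₁ ≠ w₂ ∧ f w₁ = 2 ∧ f w₂ = 2)) ∧
  (∀ v, f v = 1 → ∃ w, G.Adj v w ∧ 2 ≤ f w)

/-- The double Roman domination number `γ_dR(G)`: the minimum weight of a DRDF on `G`. -/
noncomputable def gammaDR {V : Type*} [Fintype V] (G : SimpleGraph V) : ℕ :=
  sInf {k | ∃ f : V → ℕ, IsDRDF G f ∧ ∑ v, f v = k}

/-- The double Roman bondage number `b_dR(G)`: the minimum cardinality of a set
`B` of edges of `G` such that `γ_dR(G - B) > γ_dR(G)`. -/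
noncomputable def bDR {V : Type*} [Fintype V] (G : SimpleGraph V) : ℕ :=
  sInf {k | ∃ B : Finset (Sym2 V), ↑B ⊆ G.edgeSet ∧ B.card = k ∧
    gammaDR G < gammaDR (G.deleteEdges ↑B)}


/-- If `G` is a connected graph of order `n ≥ 2` and `uv ∈ E(G)`, then
`b_dR(G) ≤ deg(u) + deg(v) − 1 − |N(u) ∩ N(v)|`. -/
theorem bDR_le_of_edge {V : Type*} [Fintype V] [DecidableEq V]
    (G : SimpleGraph V) [DecidableRel G.Adj]
    (hconn : G.Connected) (hn : 2 ≤ Fintype.card V) (u v : V) (huv : G.Adj u v) :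
    (bDR G : ℤ) ≤ (G.degree u : ℤ) + G.degree v - 1 -
      (G.neighborFinset u ∩ G.neighborFinset v).card := by
  classical
  have hune : u ≠ v := huv.ne
  set N : Finset V := G.neighborFinset u ∩ G.neighborFinset v with hN
  set I : Finset (Sym2 V) := N.image (fun w => s(v, w)) with hI
  set U : Finset (Sym2 V) := G.incidenceFinset u ∪ G.incidenceFinset v with hU
  set B : Finset (Sym2 V) := U \ I with hB
  have hNadj : ∀ w ∈ N, G.Adj u w ∧ G.Adj v w := by
    intro w hw
    rw [hN, Finset.mem_inter, SimpleGraph.mem_neighborFinset,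
      SimpleGraph.mem_neighborFinset] at hw
    exact hw
  -- membership facts
  have hIU : I ⊆ U := by
    intro e he
    rw [hI, Finset.mem_image] at he
    obtain ⟨w, hw, rfl⟩ := he
    rw [hU, Finset.mem_union, SimpleGraph.mem_incidenceFinset,
      SimpleGraph.mem_incidenceFinset]
    exact Or.inr ((G.mem_incidenceSet v w).2 (hNadj w hw).2)
  have huB : ∀ w, G.Adj u w → s(u, w) ∈ B := by
    intro w hw
    rw [hB, Finset.mem_sdiff]
    constructor
    · rw [hU, Finset.mem_union, SimpleGraph.mem_incidenceFinset]
      exact Or.inl ((G.mem_incidenceSet u w).2 hw)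
    · rw [hI, Finset.mem_image]
      rintro ⟨w', hw', he⟩
      have hu : u ∈ s(v, w') := by rw [he]; simp
      rcases Sym2.mem_iff.1 hu with h | h
      · exact hune h
      · exact (hNadj w' hw').1.ne h
  have hu_iso : ∀ w, ¬ (G.deleteEdges (↑B : Set (Sym2 V))).Adj u w := by
    intro w h
    rw [SimpleGraph.deleteEdges_adj] at h
    exact h.2 (Finset.mem_coe.2 (huB w h.1))
  have hv_adj : ∀ w, (G.deleteEdges (↑B : Set (Sym2 V))).Adj v w → w ∈ N := by
    intro w h
    rw [SimpleGraph.deleteEdges_adj] at h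
    by_contra hwN
    apply h.2
    rw [Finset.mem_coe, hB, Finset.mem_sdiff]
    constructor
    · rw [hU, Finset.mem_union, SimpleGraph.mem_incidenceFinset,
        SimpleGraph.mem_incidenceFinset]
      exact Or.inr ((G.mem_incidenceSet v w).2 h.1)
    · rw [hI, Finset.mem_image]
      rintro ⟨w', hw', he⟩
      exact hwN (Sym2.congr_right.1 he ▸ hw')
  have hadj : ∀ a b, (G.deleteEdges (↑B : Set (Sym2 V))).Adj a b → G.Adj a b := by
    intro a b h
    rw [SimpleGraph.deleteEdges_adj] at h
    exact h.1
  -- the set of DRDF weights for the deleted graph is nonempty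
  have hne : {k | ∃ f : V → ℕ, IsDRDF (G.deleteEdges (↑B : Set (Sym2 V))) f ∧ ∑ x, f x = k}.Nonempty := by
    refine ⟨∑ x : V, (fun _ : V => 2) x, fun _ => 2, ⟨fun _ => by norm_num, ?_, ?_⟩, rfl⟩
    · intro x hx; simp at hx
    · intro x hx; simp at hx
  have hmem := Nat.sInf_mem hne
  obtain ⟨f, hf, hsum⟩ := hmem
  obtain ⟨hf3, hf0, hf1⟩ := hf
  have hsumG : gammaDR (G.deleteEdges (↑B : Set (Sym2 V))) = ∑ x, f x := hsum.symm
  clear hsum hne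
  have hfu : 2 ≤ f u := by
    rcases Nat.lt_or_ge (f u) 2 with h | h
    · have h01 : f u = 0 ∨ f u = 1 := by omega
      rcases h01 with h0 | h1
      · rcases hf0 u h0 with ⟨w, hw, -⟩ | ⟨w, -, hw, -⟩ <;> exact absurd hw (hu_iso _)
      · obtain ⟨w, hw, -⟩ := hf1 u h1
        exact absurd hw (hu_iso _)
    · exact h
  -- construct a cheaper DRDF on G
  have hkey : gammaDR G < gammaDR (G.deleteEdges (↑B : Set (Sym2 V))) := by
    have hwit : ∃ g : V → ℕ, IsDRDF G g ∧ ∑ x, g x < ∑ x, f x := by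
      rcases Nat.lt_or_ge (f v) 2 with hfv | hfv
      · have h01 : f v = 0 ∨ f v = 1 := by omega
        rcases h01 with hfv' | hfv'
        · -- f v = 0
          refine ⟨Function.update f u 0, ⟨?_, ?_, ?_⟩, ?_⟩
          · intro x
            rcases eq_or_ne x u with rfl | hx
            · simp
            · rw [Function.update_of_ne hx]; exact hf3 x
          · intro x hx
            rcases eq_or_ne x u with rfl | hxu
            · rcases hf0 v hfv' with ⟨w, hw, hw3⟩ | ⟨w₁, w₂, hw₁, hw₂, hne12, h2₁, h2₂⟩
              · have hwu : w ≠ x := by rintro rfl; exact hu_iso v hw.symm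
                exact Or.inl ⟨w, (hNadj w (hv_adj w hw)).1, by rwa [Function.update_of_ne hwu]⟩
              · have hw₁u : w₁ ≠ x := by rintro rfl; exact hu_iso v hw₁.symm
                have hw₂u : w₂ ≠ x := by rintro rfl; exact hu_iso v hw₂.symm
                exact Or.inr ⟨w₁, w₂, (hNadj w₁ (hv_adj w₁ hw₁)).1,
                  (hNadj w₂ (hv_adj w₂ hw₂)).1, hne12,
                  by rwa [Function.update_of_ne hw₁u], by rwa [Function.update_of_ne hw₂u]⟩
            · rw [Function.update_of_ne hxu] at hx
              rcases hf0 x hx with ⟨w, hw, hw3⟩ | ⟨w₁, w₂, hw₁, hw₂, hne12, h2₁, h2₂⟩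
              · have hwu : w ≠ u := by rintro rfl; exact hu_iso x hw.symm
                exact Or.inl ⟨w, hadj _ _ hw, by rwa [Function.update_of_ne hwu]⟩
              · have hw₁u : w₁ ≠ u := by rintro rfl; exact hu_iso x hw₁.symm
                have hw₂u : w₂ ≠ u := by rintro rfl; exact hu_iso x hw₂.symm
                exact Or.inr ⟨w₁, w₂, hadj _ _ hw₁, hadj _ _ hw₂, hne12,
                  by rwa [Function.update_of_ne hw₁u], by rwa [Function.update_of_ne hw₂u]⟩
          · intro x hx
            rcases eq_or_ne x u with rfl | hxu
            · simp at hx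
            · rw [Function.update_of_ne hxu] at hx
              obtain ⟨w, hw, hw2⟩ := hf1 x hx
              have hwu : w ≠ u := by rintro rfl; exact hu_iso x hw.symm
              exact ⟨w, hadj _ _ hw, by rwa [Function.update_of_ne hwu]⟩
          · rw [Finset.sum_update_of_mem (Finset.mem_univ u),
              Finset.sum_eq_add_sum_sdiff_singleton_of_mem (Finset.mem_univ u) f]
            omega
        · -- f v = 1
          refine ⟨Function.update f u 1, ⟨?_, ?_, ?_⟩, ?_⟩
          · intro x
            rcases eq_or_ne x u with rfl | hx
            · simp
            · rw [Function.update_of_ne hx]; exact hf3 x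
          · intro x hx
            rcases eq_or_ne x u with rfl | hxu
            · simp at hx
            · rw [Function.update_of_ne hxu] at hx
              rcases hf0 x hx with ⟨w, hw, hw3⟩ | ⟨w₁, w₂, hw₁, hw₂, hne12, h2₁, h2₂⟩
              · have hwu : w ≠ u := by rintro rfl; exact hu_iso x hw.symm
                exact Or.inl ⟨w, hadj _ _ hw, by rwa [Function.update_of_ne hwu]⟩
              · have hw₁u : w₁ ≠ u := by rintro rfl; exact hu_iso x hw₁.symm
                have hw₂u : w₂ ≠ u := by rintro rfl; exact hu_iso x hw₂.symm
                exact Or.inr ⟨w₁, w₂, hadj _ _ hw₁, hadj _ _ hw₂, hne12,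
                  by rwa [Function.update_of_ne hw₁u], by rwa [Function.update_of_ne hw₂u]⟩
          · intro x hx
            rcases eq_or_ne x u with rfl | hxu
            · obtain ⟨w, hw, hw2⟩ := hf1 v hfv'
              have hwu : w ≠ x := by rintro rfl; exact hu_iso v hw.symm
              exact ⟨w, (hNadj w (hv_adj w hw)).1, by rwa [Function.update_of_ne hwu]⟩
            · rw [Function.update_of_ne hxu] at hx
              obtain ⟨w, hw, hw2⟩ := hf1 x hx
              have hwu : w ≠ u := by rintro rfl; exact hu_iso x hw.symm
              exact ⟨w, hadj _ _ hw, by rwa [Function.update_of_ne hwu]⟩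
          · rw [Finset.sum_update_of_mem (Finset.mem_univ u),
              Finset.sum_eq_add_sum_sdiff_singleton_of_mem (Finset.mem_univ u) f]
            omega
      · -- 2 ≤ f v
        set g : V → ℕ := Function.update (Function.update f u 0) v 3 with hg
        have hgv : g v = 3 := by simp [hg]
        have hgu : g u = 0 := by
          rw [hg, Function.update_of_ne hune, Function.update_self]
        have hgx : ∀ x, x ≠ u → x ≠ v → g x = f x := by
          intro x hxu hxv
          rw [hg, Function.update_of_ne hxv, Function.update_of_ne hxu]
        refine ⟨g, ⟨?_, ?_, ?_⟩, ?_⟩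
        · intro x
          rcases eq_or_ne x v with rfl | hxv
          · rw [hgv]
          · rcases eq_or_ne x u with rfl | hxu
            · rw [hgu]; omega
            · rw [hgx x hxu hxv]; exact hf3 x
        · intro x hx
          have hxv : x ≠ v := by rintro rfl; rw [hgv] at hx; omega
          rcases eq_or_ne x u with rfl | hxu
          · exact Or.inl ⟨v, huv, hgv⟩
          · rw [hgx x hxu hxv] at hx
            rcases hf0 x hx with ⟨w, hw, hw3⟩ | ⟨w₁, w₂, hw₁, hw₂, hne12, h2₁, h2₂⟩
            · have hwu : w ≠ u := by rintro rfl; exact hu_iso x hw.symm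
              refine Or.inl ⟨w, hadj _ _ hw, ?_⟩
              rcases eq_or_ne w v with rfl | hwv
              · exact hgv
              · rw [hgx w hwu hwv]; exact hw3
            · have hw₁u : w₁ ≠ u := by rintro rfl; exact hu_iso x hw₁.symm
              have hw₂u : w₂ ≠ u := by rintro rfl; exact hu_iso x hw₂.symm
              rcases eq_or_ne w₁ v with rfl | hw₁v
              · exact Or.inl ⟨w₁, hadj _ _ hw₁, hgv⟩
              · rcases eq_or_ne w₂ v with rfl | hw₂v
                · exact Or.inl ⟨w₂, hadj _ _ hw₂, hgv⟩
                · exact Or.inr ⟨w₁, w₂, hadj _ _ hw₁, hadj _ _ hw₂, hne12,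
                    by rw [hgx w₁ hw₁u hw₁v]; exact h2₁,
                    by rw [hgx w₂ hw₂u hw₂v]; exact h2₂⟩
        · intro x hx
          have hxv : x ≠ v := by rintro rfl; rw [hgv] at hx; omega
          have hxu : x ≠ u := by rintro rfl; rw [hgu] at hx; omega
          rw [hgx x hxu hxv] at hx
          obtain ⟨w, hw, hw2⟩ := hf1 x hx
          have hwu : w ≠ u := by rintro rfl; exact hu_iso x hw.symm
          refine ⟨w, hadj _ _ hw, ?_⟩
          rcases eq_or_ne w v with rfl | hwv
          · rw [hgv]; omega
          · rw [hgx w hwu hwv]; exact hw2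
        · have hu_mem : u ∈ (Finset.univ : Finset V) \ {v} := by
            simp [hune]
          rw [hg, Finset.sum_update_of_mem (Finset.mem_univ v),
            Finset.sum_update_of_mem hu_mem,
            Finset.sum_eq_add_sum_sdiff_singleton_of_mem (Finset.mem_univ v) f,
            Finset.sum_eq_add_sum_sdiff_singleton_of_mem hu_mem f]
          omega
    obtain ⟨g, hg, hlt⟩ := hwit
    have h1 : gammaDR G ≤ ∑ x, g x := Nat.sInf_le ⟨g, hg, rfl⟩
    omega
  -- B is a valid bondage set; compute its cardinality
  have hBsub : (↑B : Set (Sym2 V)) ⊆ G.edgeSet := by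
    intro e he
    rw [Finset.mem_coe, hB, Finset.mem_sdiff, hU, Finset.mem_union,
      SimpleGraph.mem_incidenceFinset, SimpleGraph.mem_incidenceFinset] at he
    rcases he.1 with h | h
    · exact h.1
    · exact h.1
  have hbd : bDR G ≤ B.card := Nat.sInf_le ⟨B, hBsub, rfl, hkey⟩
  have hIcard : I.card = N.card := by
    rw [hI]
    exact Finset.card_image_of_injective _ (fun a b h => Sym2.congr_right.1 h)
  have hUcard : U.card + 1 = G.degree u + G.degree v := by
    have hinter : G.incidenceFinset u ∩ G.incidenceFinset v = {s(u, v)} := by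
      ext e
      rw [Finset.mem_inter, SimpleGraph.mem_incidenceFinset,
        SimpleGraph.mem_incidenceFinset, Finset.mem_singleton]
      constructor
      · rintro ⟨⟨he1, hu1⟩, ⟨he2, hv1⟩⟩
        exact (Sym2.mem_and_mem_iff hune).1 ⟨hu1, hv1⟩
      · rintro rfl
        refine ⟨(G.mem_incidenceSet u v).2 huv, ?_⟩
        rw [Sym2.eq_swap]
        exact (G.mem_incidenceSet v u).2 huv.symm
    have := Finset.card_union_add_card_inter (G.incidenceFinset u) (G.incidenceFinset v)
    rw [hinter, Finset.card_singleton, SimpleGraph.card_incidenceFinset_eq_degree,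
      SimpleGraph.card_incidenceFinset_eq_degree] at this
    rw [hU]
    exact this
  have hBcard : B.card = U.card - I.card := by rw [hB, Finset.card_sdiff_of_subset hIU]
  have hIle : I.card ≤ U.card := Finset.card_le_card hIU
  have hfin : (B.card : ℤ) = (G.degree u : ℤ) + G.degree v - 1 - N.card := by
    have h1 : (B.card : ℤ) = (U.card : ℤ) - I.card := by
      rw [hBcard]; push_cast [Nat.cast_sub hIle]; ring
    rw [h1, hIcard]
    have : (U.card : ℤ) + 1 = (G.degree u : ℤ) + G.degree v := by exact_mod_cast hUcard
    omega
  rw [← hfin]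
  exact_mod_cast hbd
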